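/- Suppose M₀, M₁, M₂ are structures in the same vocabulary with pairwise disjoint universes, and Eve has winning strategies in DG^β_{θ,α}(M₀,M₁) and in DG^β_{θ,α'}(M₁,M₂). Then Eve has a winning strategy in DG^β_{θ,α⊕α'}(M₀,M₂), where ⊕ denotes the natural (Hessenberg) sum of ordinals. -/

import Mathlib

open Cardinal Set FirstOrder FirstOrder.Language

universe u

namespace DGPaper

variable (L : FirstOrder.Language.{u, u})

/-- A partial isomorphism between two `L`-structures, given as the graph of a partial map.
It is functional, injective, preserves all relations (of positive arity) in both directions,
and is compatible with the interpretations of all function symbols (including constants). -/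
def IsPartialIso (M N : Type u) [L.Structure M] [L.Structure N] (g : Set (M × N)) : Prop :=
  (∀ ⦃a : M⦄ ⦃b b' : N⦄, (a, b) ∈ g → (a, b') ∈ g → b = b') ∧
  (∀ ⦃a a' : M⦄ ⦃b : N⦄, (a, b) ∈ g → (a', b) ∈ g → a = a') ∧
  (∀ (n : ℕ) (R : L.Relations (n + 1)) (x : Fin (n + 1) → M) (y : Fin (n + 1) → N),
      (∀ i, (x i, y i) ∈ g) →
        (Structure.RelMap R x ↔ Structure.RelMap R y)) ∧
  (∀ (n : ℕ) (f : L.Functions n) (x : Fin n → M) (y : Fin n → N),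
      (∀ i, (x i, y i) ∈ g) →
        (∀ b : N, (Structure.funMap f x, b) ∈ g → b = Structure.funMap f y) ∧
        (∀ a : M, (a, Structure.funMap f y) ∈ g → a = Structure.funMap f x))

/-- A `(θ, α)`-position in the similarity game on `(M, N)`:  a clock ordinal `ht`, sets
`A0 ⊆ M`, `A1 ⊆ N` of cardinality `≤ θ`, a partial isomorphism `g` between them, and
height functions `h0`, `h1` taking values `< α` on `A0`, `A1`, such that every element of
height `0` is matched by `g`. -/
structure Position (M N : Type u) [L.Structure M] [L.Structure N]
    (θ : Cardinal.{u}) (α : Ordinal.{u}) : Type (u + 1) where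
  ht : Ordinal.{u}
  A0 : Set M
  A1 : Set N
  A0_card : #A0 ≤ θ
  A1_card : #A1 ≤ θ
  g : Set (M × N)
  g_iso : IsPartialIso L M N g
  g_sub : g ⊆ A0 ×ˢ A1
  h0 : M → Ordinal.{u}
  h1 : N → Ordinal.{u}
  h0_lt : ∀ a ∈ A0, h0 a < α
  h1_lt : ∀ b ∈ A1, h1 b < α
  h0_zero : ∀ a ∈ A0, h0 a = 0 → ∃ b, (a, b) ∈ g
  h1_zero : ∀ b ∈ A1, h1 b = 0 → ∃ a, (a, b) ∈ g

variable {M N : Type u} [L.Structure M] [L.Structure N] {θ : Cardinal.{u}} {α : Ordinal.{u}}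

/-- `q` extends `p` (written `q < p` in the paper): the clock strictly decreases, the sets
grow, the partial isomorphism of `q` restricted to the old sets is that of `p`, and every
height strictly decreases unless it is already `0`. -/
def Extends (q p : Position L M N θ α) : Prop :=
  q.ht < p.ht ∧ p.A0 ⊆ q.A0 ∧ p.A1 ⊆ q.A1 ∧
  p.g ⊆ q.g ∧ (∀ a b, (a, b) ∈ q.g → a ∈ p.A0 → (a, b) ∈ p.g) ∧
  (∀ a ∈ p.A0, q.h0 a ≤ p.h0 a ∧ (p.h0 a ≠ 0 → q.h0 a < p.h0 a)) ∧
  (∀ b ∈ p.A1, q.h1 b ≤ p.h1 b ∧ (p.h1 b ≠ 0 → q.h1 b < p.h1 b))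

/-- The starting position `(β, ∅, ∅, ∅, ∅)`. -/
def startPos (β : Ordinal.{u}) : Position L M N θ α where
  ht := β
  A0 := ∅
  A1 := ∅
  A0_card := by simp
  A1_card := by simp
  g := ∅
  g_iso := by
    refine ⟨?_, ?_, ?_, ?_⟩ <;> intros <;> simp_all
  g_sub := by simp
  h0 := fun _ => 0
  h1 := fun _ => 0
  h0_lt := by simp
  h1_lt := by simp
  h0_zero := by simp
  h1_zero := by simp

/-- Eve has a winning strategy in the similarity game from position `p`:  whatever clock
ordinal `β' < ht p` and sets `B0`, `B1` of size `≤ θ` Adam demands, Eve can move to an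
extending position covering them from which she again has a winning strategy.  (Since the
clock strictly decreases, the game is finite, and this well-founded recursion captures
exactly the existence of a winning strategy for Eve.) -/
noncomputable def EveWinsFrom (θ : Cardinal.{u}) (α : Ordinal.{u})
    (p : Position L M N θ α) : Prop :=
  WellFounded.fix (C := fun _ : Ordinal.{u} => Position L M N θ α → Prop) Ordinal.lt_wf
    (fun o IH p =>
      ∀ β' (hβ : β' < o) (B0 : Set M) (B1 : Set N), #B0 ≤ θ → #B1 ≤ θ →
        ∃ q : Position L M N θ α, Extends L q p ∧ q.ht = β' ∧
          B0 ⊆ q.A0 ∧ B1 ⊆ q.A1 ∧ IH β' hβ q)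
    p.ht p

/-- Eve has a winning strategy in the game `DG^β_{θ,α}(M, N)`. -/
noncomputable def EveWinsGame (M N : Type u) [L.Structure M] [L.Structure N]
    (β : Ordinal.{u}) (θ : Cardinal.{u}) (α : Ordinal.{u}) : Prop :=
  EveWinsFrom L θ α (startPos L (M := M) (N := N) β)

/-- Adam has a winning strategy from position `p`: he can demand a clock ordinal
`β' < ht p` and sets `B0`, `B1` of size `≤ θ` such that every legal reply of Eve leads to
a position from which Adam again has a winning strategy (in particular, if Eve has no
legal reply, she loses). -/
inductive AdamWinsFrom (θ : Cardinal.{u}) (α : Ordinal.{u}) :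
    Position L M N θ α → Prop where
  | step (p : Position L M N θ α) (β' : Ordinal.{u}) (hβ : β' < p.ht)
      (B0 : Set M) (B1 : Set N) (hB0 : #B0 ≤ θ) (hB1 : #B1 ≤ θ)
      (h : ∀ q : Position L M N θ α, Extends L q p → q.ht = β' →
        B0 ⊆ q.A0 → B1 ⊆ q.A1 → AdamWinsFrom θ α q) :
      AdamWinsFrom θ α p

/-- Adam has a winning strategy in the game `DG^β_{θ,α}(M, N)`. -/
def AdamWinsGame (M N : Type u) [L.Structure M] [L.Structure N]
    (β : Ordinal.{u}) (θ : Cardinal.{u}) (α : Ordinal.{u}) : Prop :=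
  AdamWinsFrom L θ α (startPos L (M := M) (N := N) β)

/-- A position of the infinite game `DG_{θ,α}(M,N)` (no clock ordinal). -/
structure IPosition (M N : Type u) [L.Structure M] [L.Structure N]
    (θ : Cardinal.{u}) (α : Ordinal.{u}) : Type (u + 1) where
  A0 : Set M
  A1 : Set N
  A0_card : #A0 ≤ θ
  A1_card : #A1 ≤ θ
  g : Set (M × N)
  g_iso : IsPartialIso L M N g
  g_sub : g ⊆ A0 ×ˢ A1
  h0 : M → Ordinal.{u}
  h1 : N → Ordinal.{u}
  h0_lt : ∀ a ∈ A0, h0 a < α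
  h1_lt : ∀ b ∈ A1, h1 b < α
  h0_zero : ∀ a ∈ A0, h0 a = 0 → ∃ b, (a, b) ∈ g
  h1_zero : ∀ b ∈ A1, h1 b = 0 → ∃ a, (a, b) ∈ g

/-- Extension of positions in the infinite game. -/
def IExtends (q p : IPosition L M N θ α) : Prop :=
  p.A0 ⊆ q.A0 ∧ p.A1 ⊆ q.A1 ∧
  p.g ⊆ q.g ∧ (∀ a b, (a, b) ∈ q.g → a ∈ p.A0 → (a, b) ∈ p.g) ∧
  (∀ a ∈ p.A0, q.h0 a ≤ p.h0 a ∧ (p.h0 a ≠ 0 → q.h0 a < p.h0 a)) ∧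
  (∀ b ∈ p.A1, q.h1 b ≤ p.h1 b ∧ (p.h1 b ≠ 0 → q.h1 b < p.h1 b))

/-- The empty starting position of the infinite game. -/
def startIPos : IPosition L M N θ α where
  A0 := ∅
  A1 := ∅
  A0_card := by simp
  A1_card := by simp
  g := ∅
  g_iso := by
    refine ⟨?_, ?_, ?_, ?_⟩ <;> intros <;> simp_all
  g_sub := by simp
  h0 := fun _ => 0
  h1 := fun _ => 0
  h0_lt := by simp
  h1_lt := by simp
  h0_zero := by simp
  h1_zero := by simp

/-- Eve has a winning strategy in the infinite game `DG_{θ,α}(M, N)` of length `ω`.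
Since this game is closed for Eve, having a winning strategy is equivalent to having a
positional one, i.e. a set `K` of positions containing the starting position such that Eve
can answer any challenge of Adam while staying inside `K`. -/
def EveWinsInfGame (M N : Type u) [L.Structure M] [L.Structure N]
    (θ : Cardinal.{u}) (α : Ordinal.{u}) : Prop :=
  ∃ K : Set (IPosition L M N θ α), startIPos L ∈ K ∧
    ∀ p ∈ K, ∀ (B0 : Set M) (B1 : Set N), #B0 ≤ θ → #B1 ≤ θ →
      ∃ q ∈ K, IExtends L q p ∧ B0 ⊆ q.A0 ∧ B1 ⊆ q.A1

end DGPaper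

/-- The natural (Hessenberg) sum of ordinals, as `Ordinal.nadd` was defined in Mathlib
(removed from the current Mathlib). -/
noncomputable def Ordinal.nadd : Ordinal.{u} → Ordinal.{u} → Ordinal.{u}
  | a, b =>
    max (⨆ x : Iio a, Order.succ (Ordinal.nadd x.1 b))
      (⨆ x : Iio b, Order.succ (Ordinal.nadd a x.1))
termination_by a b => (a, b)
decreasing_by all_goals cases x; decreasing_tactic

infixl:65 " ♯ " => Ordinal.nadd

namespace Ordinal

protected theorem zero_le (a : Ordinal.{u}) : 0 ≤ a := by simp

protected theorem not_lt_zero (a : Ordinal.{u}) : ¬ a < 0 := by simp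

theorem nadd_def (a b : Ordinal.{u}) : a ♯ b =
    max (⨆ x : Iio a, Order.succ (x.1 ♯ b)) (⨆ x : Iio b, Order.succ (a ♯ x.1)) := by
  rw [Ordinal.nadd]

theorem nadd_lt_nadd_left {b c : Ordinal.{u}} (h : b < c) (a : Ordinal.{u}) : a ♯ b < a ♯ c := by
  rw [nadd_def a c]
  refine lt_of_lt_of_le ?_ (le_max_right _ _)
  refine lt_of_lt_of_le (Order.lt_succ (a ♯ b)) ?_
  exact le_ciSup (f := fun x : Iio c => Order.succ (a ♯ x.1)) (bddAbove_of_small) ⟨b, h⟩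

theorem nadd_lt_nadd_right {b c : Ordinal.{u}} (h : b < c) (a : Ordinal.{u}) : b ♯ a < c ♯ a := by
  rw [nadd_def c a]
  refine lt_of_lt_of_le ?_ (le_max_left _ _)
  refine lt_of_lt_of_le (Order.lt_succ (b ♯ a)) ?_
  exact le_ciSup (f := fun x : Iio c => Order.succ (x.1 ♯ a)) (bddAbove_of_small) ⟨b, h⟩

theorem nadd_le_nadd_left {b c : Ordinal.{u}} (h : b ≤ c) (a : Ordinal.{u}) : a ♯ b ≤ a ♯ c := by
  rcases h.lt_or_eq with h | h
  · exact (nadd_lt_nadd_left h a).le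
  · rw [h]

theorem nadd_le_nadd_right {b c : Ordinal.{u}} (h : b ≤ c) (a : Ordinal.{u}) : b ♯ a ≤ c ♯ a := by
  rcases h.lt_or_eq with h | h
  · exact (nadd_lt_nadd_right h a).le
  · rw [h]

theorem nadd_comm (a b : Ordinal.{u}) : a ♯ b = b ♯ a := by
  induction a using Ordinal.induction generalizing b with
  | h a IHa =>
  induction b using Ordinal.induction with
  | h b IHb =>
  rw [nadd_def a b, nadd_def b a, max_comm]
  have e1 : (fun x : Iio a => Order.succ (x.1 ♯ b)) = (fun x : Iio a => Order.succ (b ♯ x.1)) := by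
    funext x; rw [IHa x.1 x.2 b]
  have e2 : (fun x : Iio b => Order.succ (a ♯ x.1)) = (fun x : Iio b => Order.succ (x.1 ♯ a)) := by
    funext x; rw [IHb x.1 x.2]
  rw [e1, e2]

@[simp] theorem nadd_zero (a : Ordinal.{u}) : a ♯ 0 = a := by
  induction a using Ordinal.induction with
  | h a IH =>
  apply le_antisymm
  · rw [nadd_def]
    refine max_le (ciSup_le' fun x => ?_) (ciSup_le' fun x => ?_)
    · rw [IH x.1 x.2]; exact Order.succ_le_of_lt x.2
    · exact absurd x.2 (by simp)
  · refine le_of_forall_lt fun x hx => ?_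
    have := nadd_lt_nadd_right hx 0
    rwa [IH x hx] at this

@[simp] theorem zero_nadd (a : Ordinal.{u}) : 0 ♯ a = a := by
  rw [nadd_comm, nadd_zero]

end Ordinal

namespace DGPaper

variable (L : FirstOrder.Language.{u, u})

section Compose

lemma nadd_eq_zero_iff {a b : Ordinal.{u}} : a ♯ b = 0 ↔ a = 0 ∧ b = 0 := by
  have h1 : a ≤ a ♯ b :=
    calc a = a ♯ 0 := (Ordinal.nadd_zero a).symm
    _ ≤ a ♯ b := Ordinal.nadd_le_nadd_left (Ordinal.zero_le b) a
  have h2 : b ≤ a ♯ b :=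
    calc b = 0 ♯ b := (Ordinal.zero_nadd b).symm
    _ ≤ a ♯ b := Ordinal.nadd_le_nadd_right (Ordinal.zero_le a) b
  constructor
  · intro h
    exact ⟨le_antisymm (h ▸ h1) (Ordinal.zero_le a), le_antisymm (h ▸ h2) (Ordinal.zero_le b)⟩
  · rintro ⟨rfl, rfl⟩; simp

lemma nadd_lt_nadd_of_lt_of_le {a b c d : Ordinal.{u}} (h1 : a < c) (h2 : b ≤ d) :
    a ♯ b < c ♯ d :=
  lt_of_le_of_lt (Ordinal.nadd_le_nadd_left h2 a) (Ordinal.nadd_lt_nadd_right h1 d)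

lemma nadd_lt_nadd_of_le_of_lt {a b c d : Ordinal.{u}} (h1 : a ≤ c) (h2 : b < d) :
    a ♯ b < c ♯ d :=
  lt_of_le_of_lt (Ordinal.nadd_le_nadd_right h1 b) (Ordinal.nadd_lt_nadd_left h2 c)

lemma nadd_le_nadd' {a b c d : Ordinal.{u}} (h1 : a ≤ c) (h2 : b ≤ d) :
    a ♯ b ≤ c ♯ d :=
  le_trans (Ordinal.nadd_le_nadd_right h1 b) (Ordinal.nadd_le_nadd_left h2 c)

variable {M N : Type u} [L.Structure M] [L.Structure N] {θ : Cardinal.{u}} {α : Ordinal.{u}}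

/-- Unfolding of the well-founded recursion defining `EveWinsFrom`. -/
lemma eveWinsFrom_iff (p : Position L M N θ α) :
    EveWinsFrom L θ α p ↔
      ∀ β' (_ : β' < p.ht) (B0 : Set M) (B1 : Set N), #B0 ≤ θ → #B1 ≤ θ →
        ∃ q : Position L M N θ α, Extends L q p ∧ q.ht = β' ∧
          B0 ⊆ q.A0 ∧ B1 ⊆ q.A1 ∧ EveWinsFrom L θ α q := by
  unfold EveWinsFrom
  rw [WellFounded.fix_eq]
  constructor <;> intro H β' hβ B0 B1 hB0 hB1 <;>
    obtain ⟨q, he, hht, hb0, hb1, hw⟩ := H β' hβ B0 B1 hB0 hB1 <;>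
    refine ⟨q, he, hht, hb0, hb1, ?_⟩
  · rw [hht]; exact hw
  · rw [hht] at hw; exact hw

end Compose

section NatSum

variable {M₀ M₁ M₂ : Type u} [L.Structure M₀] [L.Structure M₁] [L.Structure M₂]
  {θ : Cardinal.{u}} {α α' : Ordinal.{u}}

/-- Composition of two partial-map graphs. -/
def compG (g₁ : Set (M₀ × M₁)) (g₂ : Set (M₁ × M₂)) : Set (M₀ × M₂) :=
  {x | ∃ b, (x.1, b) ∈ g₁ ∧ (b, x.2) ∈ g₂}

lemma comp_isPartialIso {g₁ : Set (M₀ × M₁)} {g₂ : Set (M₁ × M₂)}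
    (h₁ : IsPartialIso L M₀ M₁ g₁) (h₂ : IsPartialIso L M₁ M₂ g₂) :
    IsPartialIso L M₀ M₂ (compG g₁ g₂) := by
  obtain ⟨f1, i1, r1, fn1⟩ := h₁
  obtain ⟨f2, i2, r2, fn2⟩ := h₂
  refine ⟨?_, ?_, ?_, ?_⟩
  · rintro a c c' ⟨b, hb1, hb2⟩ ⟨b', hb1', hb2'⟩
    exact f2 ((f1 hb1 hb1') ▸ hb2) hb2'
  · rintro a a' c ⟨b, hb1, hb2⟩ ⟨b', hb1', hb2'⟩
    exact i1 hb1 ((i2 hb2 hb2') ▸ hb1')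
  · intro n R x z hxz
    have hy : ∀ i, ∃ b, (x i, b) ∈ g₁ ∧ (b, z i) ∈ g₂ := fun i => hxz i
    let y : Fin (n + 1) → M₁ := fun i => (hy i).choose
    have h1 : ∀ i, (x i, y i) ∈ g₁ := fun i => (hy i).choose_spec.1
    have h2 : ∀ i, (y i, z i) ∈ g₂ := fun i => (hy i).choose_spec.2
    exact (r1 n R x y h1).trans (r2 n R y z h2)
  · intro n f x z hxz
    have hy : ∀ i, ∃ b, (x i, b) ∈ g₁ ∧ (b, z i) ∈ g₂ := fun i => hxz i
    let y : Fin n → M₁ := fun i => (hy i).choose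
    have h1 : ∀ i, (x i, y i) ∈ g₁ := fun i => (hy i).choose_spec.1
    have h2 : ∀ i, (y i, z i) ∈ g₂ := fun i => (hy i).choose_spec.2
    constructor
    · rintro c ⟨b, hb1, hb2⟩
      have hb : b = Structure.funMap f y := (fn1 n f x y h1).1 b hb1
      exact (fn2 n f y z h2).1 c (hb ▸ hb2)
    · rintro a ⟨b, hb1, hb2⟩
      have hb : b = Structure.funMap f y := (fn2 n f y z h2).2 b hb2
      exact (fn1 n f x y h1).2 a (hb ▸ hb1)

open scoped Classical in
/-- Composite height on the `M₀` side. -/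
noncomputable def cH0 (p₁ : Position L M₀ M₁ θ α) (p₂ : Position L M₁ M₂ θ α')
    (a : M₀) : Ordinal.{u} :=
  p₁.h0 a ♯ (if h : ∃ b, (a, b) ∈ p₁.g then p₂.h0 h.choose else α')

open scoped Classical in
/-- Composite height on the `M₂` side. -/
noncomputable def cH1 (p₁ : Position L M₀ M₁ θ α) (p₂ : Position L M₁ M₂ θ α')
    (c : M₂) : Ordinal.{u} :=
  p₂.h1 c ♯ (if h : ∃ b, (b, c) ∈ p₂.g ∧ b ∈ p₁.A1 then p₁.h1 h.choose else α)

lemma cH0_eq_match {p₁ : Position L M₀ M₁ θ α} {p₂ : Position L M₁ M₂ θ α'}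
    {a : M₀} {b : M₁} (hb : (a, b) ∈ p₁.g) :
    cH0 L p₁ p₂ a = p₁.h0 a ♯ p₂.h0 b := by
  have hm : ∃ b, (a, b) ∈ p₁.g := ⟨b, hb⟩
  rw [cH0, dif_pos hm, p₁.g_iso.1 hm.choose_spec hb]

lemma cH0_eq_nomatch {p₁ : Position L M₀ M₁ θ α} {p₂ : Position L M₁ M₂ θ α'}
    {a : M₀} (hm : ¬ ∃ b, (a, b) ∈ p₁.g) :
    cH0 L p₁ p₂ a = p₁.h0 a ♯ α' := by
  rw [cH0, dif_neg hm]

lemma cH1_eq_match {p₁ : Position L M₀ M₁ θ α} {p₂ : Position L M₁ M₂ θ α'}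
    {c : M₂} {b : M₁} (hb : (b, c) ∈ p₂.g) (hbA : b ∈ p₁.A1) :
    cH1 L p₁ p₂ c = p₂.h1 c ♯ p₁.h1 b := by
  have hm : ∃ b, (b, c) ∈ p₂.g ∧ b ∈ p₁.A1 := ⟨b, hb, hbA⟩
  rw [cH1, dif_pos hm, p₂.g_iso.2.1 hm.choose_spec.1 hb]

lemma cH1_eq_nomatch {p₁ : Position L M₀ M₁ θ α} {p₂ : Position L M₁ M₂ θ α'}
    {c : M₂} (hm : ¬ ∃ b, (b, c) ∈ p₂.g ∧ b ∈ p₁.A1) :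
    cH1 L p₁ p₂ c = p₂.h1 c ♯ α := by
  rw [cH1, dif_neg hm]

lemma nadd_pair_step {x y x' y' : Ordinal.{u}} (hx : x' ≤ x ∧ (x ≠ 0 → x' < x))
    (hy : y' ≤ y ∧ (y ≠ 0 → y' < y)) :
    x' ♯ y' ≤ x ♯ y ∧ (x ♯ y ≠ 0 → x' ♯ y' < x ♯ y) := by
  refine ⟨nadd_le_nadd' hx.1 hy.1, fun h => ?_⟩
  by_cases hx0 : x = 0
  · have hy0 : y ≠ 0 := fun h0 => h (by rw [hx0, h0]; simp)
    exact nadd_lt_nadd_of_le_of_lt hx.1 (hy.2 hy0)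
  · exact nadd_lt_nadd_of_lt_of_le (hx.2 hx0) hy.1

lemma cH0_step {p₁ q₁ : Position L M₀ M₁ θ α} {p₂ q₂ : Position L M₁ M₂ θ α'}
    (E1 : Extends L q₁ p₁) (E2 : Extends L q₂ p₂)
    (invp : p₁.A1 ⊆ p₂.A0) (invq : q₁.A1 ⊆ q₂.A0) {a : M₀} (ha : a ∈ p₁.A0) :
    cH0 L q₁ q₂ a ≤ cH0 L p₁ p₂ a ∧
      (cH0 L p₁ p₂ a ≠ 0 → cH0 L q₁ q₂ a < cH0 L p₁ p₂ a) := by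
  obtain ⟨-, -, -, hgsub, -, hE1h0, -⟩ := E1
  obtain ⟨-, -, -, -, -, hE2h0, -⟩ := E2
  by_cases hm : ∃ b, (a, b) ∈ p₁.g
  · obtain ⟨b, hb⟩ := hm
    have hbq : (a, b) ∈ q₁.g := hgsub hb
    have hbA : b ∈ p₂.A0 := invp (p₁.g_sub hb).2
    rw [cH0_eq_match L hb, cH0_eq_match L hbq]
    exact nadd_pair_step (hE1h0 a ha) (hE2h0 b hbA)
  · have hz : p₁.h0 a ≠ 0 := fun h0 => hm (p₁.h0_zero a ha h0)
    have hlt : q₁.h0 a < p₁.h0 a := (hE1h0 a ha).2 hz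
    rw [cH0_eq_nomatch L hm]
    by_cases hm' : ∃ b, (a, b) ∈ q₁.g
    · obtain ⟨b, hb⟩ := hm'
      rw [cH0_eq_match L hb]
      have hb' : q₂.h0 b < α' := q₂.h0_lt b (invq (q₁.g_sub hb).2)
      have : q₁.h0 a ♯ q₂.h0 b < p₁.h0 a ♯ α' :=
        nadd_lt_nadd_of_lt_of_le hlt hb'.le
      exact ⟨this.le, fun _ => this⟩
    · rw [cH0_eq_nomatch L hm']
      have : q₁.h0 a ♯ α' < p₁.h0 a ♯ α' := nadd_lt_nadd_of_lt_of_le hlt le_rfl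
      exact ⟨this.le, fun _ => this⟩

lemma cH1_step {p₁ q₁ : Position L M₀ M₁ θ α} {p₂ q₂ : Position L M₁ M₂ θ α'}
    (E1 : Extends L q₁ p₁) (E2 : Extends L q₂ p₂)
    (hdem : p₂.A0 ⊆ q₁.A1) {c : M₂} (hc : c ∈ p₂.A1) :
    cH1 L q₁ q₂ c ≤ cH1 L p₁ p₂ c ∧
      (cH1 L p₁ p₂ c ≠ 0 → cH1 L q₁ q₂ c < cH1 L p₁ p₂ c) := by
  obtain ⟨-, -, hA1sub, -, -, -, hE1h1⟩ := E1
  obtain ⟨-, -, -, hgsub2, -, -, hE2h1⟩ := E2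
  by_cases hm : ∃ b, (b, c) ∈ p₂.g
  · obtain ⟨b, hb⟩ := hm
    have hbq : (b, c) ∈ q₂.g := hgsub2 hb
    by_cases hA : b ∈ p₁.A1
    · rw [cH1_eq_match L hb hA, cH1_eq_match L hbq (hA1sub hA)]
      exact nadd_pair_step (hE2h1 c hc) (hE1h1 b hA)
    · have hnom : ¬ ∃ b', (b', c) ∈ p₂.g ∧ b' ∈ p₁.A1 := by
        rintro ⟨b', hb', hb'A⟩
        exact hA ((p₂.g_iso.2.1 hb' hb) ▸ hb'A)
      rw [cH1_eq_nomatch L hnom]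
      have hbq1 : b ∈ q₁.A1 := hdem (p₂.g_sub hb).1
      rw [cH1_eq_match L hbq hbq1]
      have : q₂.h1 c ♯ q₁.h1 b < p₂.h1 c ♯ α :=
        nadd_lt_nadd_of_le_of_lt (hE2h1 c hc).1 (q₁.h1_lt b hbq1)
      exact ⟨this.le, fun _ => this⟩
  · have hnom : ¬ ∃ b, (b, c) ∈ p₂.g ∧ b ∈ p₁.A1 := fun ⟨b, hb, _⟩ => hm ⟨b, hb⟩
    have hz : p₂.h1 c ≠ 0 := fun h0 => hm (p₂.h1_zero c hc h0)
    have hlt : q₂.h1 c < p₂.h1 c := (hE2h1 c hc).2 hz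
    rw [cH1_eq_nomatch L hnom]
    by_cases hm' : ∃ b, (b, c) ∈ q₂.g ∧ b ∈ q₁.A1
    · obtain ⟨b, hb, hbA⟩ := hm'
      rw [cH1_eq_match L hb hbA]
      have : q₂.h1 c ♯ q₁.h1 b < p₂.h1 c ♯ α :=
        nadd_lt_nadd_of_lt_of_le hlt (q₁.h1_lt b hbA).le
      exact ⟨this.le, fun _ => this⟩
    · rw [cH1_eq_nomatch L hm']
      have : q₂.h1 c ♯ α < p₂.h1 c ♯ α := nadd_lt_nadd_of_lt_of_le hlt le_rfl
      exact ⟨this.le, fun _ => this⟩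

/-- The composite position built from linked positions of the two component games. -/
noncomputable def compPos (q₁ : Position L M₀ M₁ θ α) (q₂ : Position L M₁ M₂ θ α')
    (inv : q₁.A1 ⊆ q₂.A0) (F : α = 0 → IsEmpty M₁ ∨ θ = 0) :
    Position L M₀ M₂ θ (Ordinal.nadd α α') where
  ht := q₁.ht
  A0 := q₁.A0
  A1 := q₂.A1
  A0_card := q₁.A0_card
  A1_card := q₂.A1_card
  g := compG q₁.g q₂.g
  g_iso := comp_isPartialIso L q₁.g_iso q₂.g_iso
  g_sub := by
    rintro ⟨a, c⟩ ⟨b, hb1, hb2⟩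
    exact ⟨(q₁.g_sub hb1).1, (q₂.g_sub hb2).2⟩
  h0 := cH0 L q₁ q₂
  h1 := cH1 L q₁ q₂
  h0_lt := by
    intro a ha
    by_cases hm : ∃ b, (a, b) ∈ q₁.g
    · obtain ⟨b, hb⟩ := hm
      rw [cH0_eq_match L hb]
      exact nadd_lt_nadd_of_lt_of_le (q₁.h0_lt a ha)
        (q₂.h0_lt b (inv (q₁.g_sub hb).2)).le
    · rw [cH0_eq_nomatch L hm]
      exact nadd_lt_nadd_of_lt_of_le (q₁.h0_lt a ha) le_rfl
  h1_lt := by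
    intro c hc
    show cH1 L q₁ q₂ c < Ordinal.nadd α α'
    rw [show Ordinal.nadd α α' = α' ♯ α from Ordinal.nadd_comm α α']
    by_cases hm : ∃ b, (b, c) ∈ q₂.g ∧ b ∈ q₁.A1
    · obtain ⟨b, hb, hbA⟩ := hm
      rw [cH1_eq_match L hb hbA]
      exact nadd_lt_nadd_of_lt_of_le (q₂.h1_lt c hc) (q₁.h1_lt b hbA).le
    · rw [cH1_eq_nomatch L hm]
      exact nadd_lt_nadd_of_lt_of_le (q₂.h1_lt c hc) le_rfl
  h0_zero := by
    intro a ha h0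
    by_cases hm : ∃ b, (a, b) ∈ q₁.g
    · obtain ⟨b, hb⟩ := hm
      rw [cH0_eq_match L hb] at h0
      obtain ⟨h01, h02⟩ := (nadd_eq_zero_iff).1 h0
      obtain ⟨c, hc⟩ := q₂.h0_zero b (inv (q₁.g_sub hb).2) h02
      exact ⟨c, b, hb, hc⟩
    · rw [cH0_eq_nomatch L hm] at h0
      exact absurd (q₁.h0_zero a ha ((nadd_eq_zero_iff).1 h0).1) hm
  h1_zero := by
    intro c hc h0
    by_cases hm : ∃ b, (b, c) ∈ q₂.g ∧ b ∈ q₁.A1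
    · obtain ⟨b, hb, hbA⟩ := hm
      rw [cH1_eq_match L hb hbA] at h0
      obtain ⟨h01, h02⟩ := (nadd_eq_zero_iff).1 h0
      obtain ⟨a, hag⟩ := q₁.h1_zero b hbA h02
      exact ⟨a, b, hag, hb⟩
    · rw [cH1_eq_nomatch L hm] at h0
      obtain ⟨h01, h02⟩ := (nadd_eq_zero_iff).1 h0
      obtain ⟨b, hb⟩ := q₂.h1_zero c hc h01
      have hbA0 : b ∈ q₂.A0 := (q₂.g_sub hb).1
      rcases F h02 with hEmp | hθ
      · exact hEmp.elim b
      · exfalso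
        have : #q₂.A0 = 0 := le_antisymm (hθ ▸ q₂.A0_card) zero_le
        exact (Cardinal.mk_eq_zero_iff.1 this).elim ⟨b, hbA0⟩

/-- The linking invariant maintained by Eve between the composite game position `p`
and the component game positions `p₁`, `p₂`. -/
def Link (p : Position L M₀ M₂ θ (Ordinal.nadd α α'))
    (p₁ : Position L M₀ M₁ θ α) (p₂ : Position L M₁ M₂ θ α') : Prop :=
  p₁.ht = p.ht ∧ p₂.ht = p.ht ∧ p.A0 = p₁.A0 ∧ p.A1 = p₂.A1 ∧
  p.g = compG p₁.g p₂.g ∧ p₁.A1 ⊆ p₂.A0 ∧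
  (∀ a ∈ p.A0, p.h0 a = cH0 L p₁ p₂ a) ∧ (∀ c ∈ p.A1, p.h1 c = cH1 L p₁ p₂ c)

lemma eveWinsFrom_comp (F : α = 0 → IsEmpty M₁ ∨ θ = 0) (o : Ordinal.{u}) :
    ∀ (p : Position L M₀ M₂ θ (Ordinal.nadd α α')) (p₁ : Position L M₀ M₁ θ α)
      (p₂ : Position L M₁ M₂ θ α'), p.ht = o → Link L p p₁ p₂ →
      EveWinsFrom L θ α p₁ → EveWinsFrom L θ α' p₂ →
      EveWinsFrom L θ (Ordinal.nadd α α') p := by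
  induction o using Ordinal.induction with
  | h o IH =>
  intro p p₁ p₂ ho hL W1 W2
  obtain ⟨hht1, hht2, hA0, hA1, hg, hinv, hh0, hh1⟩ := hL
  rw [eveWinsFrom_iff]
  intro β' hβ B0 B2 hB0 hB2
  obtain ⟨q₁, E1, hq1ht, hB0q1, hdem1, W1'⟩ :=
    (eveWinsFrom_iff L p₁).1 W1 β' (by rw [hht1]; exact hβ) B0 p₂.A0 hB0 p₂.A0_card
  obtain ⟨q₂, E2, hq2ht, hdem2, hB2q2, W2'⟩ :=
    (eveWinsFrom_iff L p₂).1 W2 β' (by rw [hht2]; exact hβ) q₁.A1 B2 q₁.A1_card hB2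
  set Q := compPos L q₁ q₂ hdem2 F with hQ
  have hQht : Q.ht = β' := hq1ht
  refine ⟨Q, ?_, hQht, hB0q1, hB2q2,
    IH β' (ho ▸ hβ) Q q₁ q₂ hQht
      ⟨hQht.symm ▸ hq1ht, hQht.symm ▸ hq2ht, rfl, rfl, rfl, hdem2,
        fun a _ => rfl, fun c _ => rfl⟩ W1' W2'⟩
  obtain ⟨hE1ht, hE1A0, hE1A1, hE1g, hE1cl, hE1h0, hE1h1⟩ := E1
  obtain ⟨hE2ht, hE2A0, hE2A1, hE2g, hE2cl, hE2h0, hE2h1⟩ := E2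
  refine ⟨?_, ?_, ?_, ?_, ?_, ?_, ?_⟩
  · rw [show Q.ht = β' from hq1ht]; exact hβ
  · rw [hA0]; exact hE1A0
  · rw [hA1]; exact hE2A1
  · rw [hg]
    rintro ⟨a, c⟩ ⟨b, hb1, hb2⟩
    exact ⟨b, hE1g hb1, hE2g hb2⟩
  · intro a c hqg hpA0
    rw [hg]
    obtain ⟨b, hb1, hb2⟩ := hqg
    have ha1 : a ∈ p₁.A0 := hA0 ▸ hpA0
    have hb1' : (a, b) ∈ p₁.g := hE1cl a b hb1 ha1
    exact ⟨b, hb1', hE2cl b c hb2 (hinv (p₁.g_sub hb1').2)⟩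
  · intro a ha
    rw [hh0 a ha]
    exact cH0_step L ⟨hE1ht, hE1A0, hE1A1, hE1g, hE1cl, hE1h0, hE1h1⟩
      ⟨hE2ht, hE2A0, hE2A1, hE2g, hE2cl, hE2h0, hE2h1⟩ hinv hdem2 (hA0 ▸ ha)
  · intro c hc
    rw [hh1 c hc]
    exact cH1_step L ⟨hE1ht, hE1A0, hE1A1, hE1g, hE1cl, hE1h0, hE1h1⟩
      ⟨hE2ht, hE2A0, hE2A1, hE2g, hE2cl, hE2h0, hE2h1⟩ hdem1 (hA1 ▸ hc)

end NatSum
end DGPaper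

open DGPaper in
/-- Proposition `proposition:natural-sum`.  If Eve has winning
strategies in `DG^β_{θ,α}(M₀,M₁)` and `DG^β_{θ,α'}(M₁,M₂)`, then she has a winning
strategy in `DG^β_{θ,α⊕α'}(M₀,M₂)`, where `⊕` is the natural (Hessenberg) sum of
ordinals.  (The universes of the three structures are distinct types, hence pairwise
disjoint.) -/
theorem eve_wins_natural_sum (L : FirstOrder.Language.{u, u})
    (M₀ M₁ M₂ : Type u) [L.Structure M₀] [L.Structure M₁] [L.Structure M₂]
    (θ : Cardinal.{u}) (α α' β : Ordinal.{u})
    (h01 : EveWinsGame L M₀ M₁ β θ α)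
    (h12 : EveWinsGame L M₁ M₂ β θ α') :
    EveWinsGame L M₀ M₂ β θ (Ordinal.nadd α α') := by
  by_cases hβ0 : β = 0
  · subst hβ0
    unfold EveWinsGame
    rw [eveWinsFrom_iff]
    intro β' hβ' _ _ _ _
    exact absurd hβ' (Ordinal.not_lt_zero β')
  · have hβpos : (0 : Ordinal) < β := pos_iff_ne_zero.2 hβ0
    have F : α = 0 → IsEmpty M₁ ∨ θ = 0 := by
      intro hα
      by_cases hθ : θ = 0
      · exact Or.inr hθ
      · refine Or.inl ⟨fun b => ?_⟩
        obtain ⟨q, -, -, -, hb1, -⟩ := (eveWinsFrom_iff L _).1 h01 0 hβpos ∅ {b}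
          (by simp) (by rw [Cardinal.mk_singleton]; exact Cardinal.one_le_iff_ne_zero.2 hθ)
        have h := lt_of_lt_of_le (q.h1_lt b (hb1 rfl)) hα.le
        exact absurd h (Ordinal.not_lt_zero _)
    have hgstart : (startPos L (M := M₀) (N := M₂)
        (θ := θ) (α := Ordinal.nadd α α') β).g =
        compG (startPos L (M := M₀) (N := M₁) (θ := θ) (α := α) β).g
          (startPos L (M := M₁) (N := M₂) (θ := θ) (α := α') β).g := by
      ext ⟨a, c⟩
      simp [compG, startPos]
    exact eveWinsFrom_comp L F β _ _ _ rfl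
      ⟨rfl, rfl, rfl, rfl, hgstart, Set.Subset.rfl,
        fun a ha => absurd ha (Set.notMem_empty a),
        fun c hc => absurd hc (Set.notMem_empty c)⟩ h01 h12
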